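/- arXiv:1708.00457 — 2 statements merged into one kernel-verified Lean document; each statement's English description precedes it below -/
import Mathlib

section
/- Let (uₙ) be a bounded sequence in H^{1/2}(ℝ) such that for some R > 0, lim_{n→∞} sup_{y ∈ ℝ} ∫_{y−R}^{y+R} |uₙ|² dx = 0. Then uₙ → 0 strongly in L^p(ℝ) for every p ∈ (2, ∞). -/
open MeasureTheory Filter

/-- The squared Gagliardo `H^{1/2}(ℝ)` seminorm as an extended-real double integral. -/
noncomputable def gagliardoSq (u : ℝ → ℝ) : ENNReal :=
  ∫⁻ x : ℝ, ∫⁻ y : ℝ, ENNReal.ofReal ((u x - u y) ^ 2 / (x - y) ^ 2)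

open Set

set_option maxHeartbeats 1000000

namespace VanishAux

/-- `(a+b)^k ≤ 2^k (a^k + b^k)` in `ℝ≥0∞`. -/
lemma add_pow_le (a b : ENNReal) (k : ℕ) : (a + b) ^ k ≤ 2 ^ k * (a ^ k + b ^ k) := by
  calc (a + b) ^ k ≤ (2 * max a b) ^ k := by
        gcongr
        rcases le_total a b with h | h
        · calc a + b ≤ b + b := by gcongr
            _ = 2 * max a b := by rw [max_eq_right h, two_mul]
        · calc a + b ≤ a + a := by gcongr
            _ = 2 * max a b := by rw [max_eq_left h, two_mul]
    _ = 2 ^ k * max a b ^ k := mul_pow _ _ _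
    _ ≤ 2 ^ k * (a ^ k + b ^ k) := by
        gcongr
        rcases le_total a b with h | h
        · rw [max_eq_right h]; exact le_add_self
        · rw [max_eq_left h]; exact le_add_right le_rfl

/-- Hölder with the constant function: `∫_s f ≤ (∫_s f^m)^(1/m) (μ s)^(1-1/m)`. -/
lemma lintegral_le_pow_mul {α : Type*} [MeasurableSpace α] {μ : Measure α}
    {f : α → ENNReal} (hf : AEMeasurable f μ) {m : ℕ} (hm : 1 ≤ m) :
    ∫⁻ x, f x ∂μ ≤ (∫⁻ x, f x ^ m ∂μ) ^ (1/(m:ℝ)) * (μ Set.univ) ^ (1 - 1/(m:ℝ)) := by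
  rcases eq_or_lt_of_le hm with h1 | h2
  · simp [← h1]
  · have hm1 : (1:ℝ) < m := by exact_mod_cast h2
    have hconj : (m:ℝ).HolderConjugate ((m:ℝ)/((m:ℝ)-1)) :=
      (Real.holderConjugate_iff_eq_conjExponent hm1).2 rfl
    have h := ENNReal.lintegral_mul_le_Lp_mul_Lq μ hconj hf
      (aemeasurable_const (b := (1:ENNReal))) (g := fun _ => 1)
    simp only [Pi.mul_apply, mul_one, ENNReal.one_rpow, lintegral_const, one_mul,
      Measure.restrict_apply, MeasurableSet.univ] at h
    calc ∫⁻ x, f x ∂μ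
        ≤ (∫⁻ x, f x ^ (m:ℝ) ∂μ) ^ (1/(m:ℝ)) * (μ Set.univ) ^ (1/((m:ℝ)/((m:ℝ)-1))) := h
      _ = (∫⁻ x, f x ^ m ∂μ) ^ (1/(m:ℝ)) * (μ Set.univ) ^ (1 - 1/(m:ℝ)) := by
          congr 1
          · congr 1; exact lintegral_congr fun x => by rw [ENNReal.rpow_natCast]
          · congr 1
            field_simp


noncomputable def W (u : ℝ → ℝ) (x : ℝ) : ENNReal := ENNReal.ofReal ((u x)^2)
noncomputable def G (u : ℝ → ℝ) (x y : ℝ) : ENNReal :=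
  ENNReal.ofReal ((u x - u y)^2/(x-y)^2)
noncomputable def D (u : ℝ → ℝ) (s : Set ℝ) (x : ℝ) : ENNReal := ∫⁻ y in s, G u x y

lemma meas_W {u : ℝ → ℝ} (hu : Measurable u) : Measurable (W u) := by
  unfold W; measurability

lemma meas_G {u : ℝ → ℝ} (hu : Measurable u) :
    Measurable (Function.uncurry (G u)) := by
  unfold G Function.uncurry
  apply Measurable.ennreal_ofReal
  apply Measurable.div
  · exact ((hu.comp measurable_fst).sub (hu.comp measurable_snd)).pow_const 2
  · exact (measurable_fst.sub measurable_snd).pow_const 2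

lemma meas_G_right {u : ℝ → ℝ} (hu : Measurable u) (x : ℝ) :
    Measurable (G u x) :=
  (meas_G hu).comp (measurable_prodMk_left)

lemma meas_D {u : ℝ → ℝ} (hu : Measurable u) (s : Set ℝ) :
    Measurable (D u s) :=
  Measurable.lintegral_prod_right (meas_G hu)

lemma star {u : ℝ → ℝ} (hu : Measurable u) {a L x r : ℝ}
    (hx : x ∈ Ico a (a+L)) (hr : 0 < r) (hrL : r ≤ L/2) {m : ℕ} (hm : 1 ≤ m) :
    W u x * ENNReal.ofReal r ≤
      2 * ((∫⁻ y in Ico a (a+L), W u y ^ m) ^ (1/(m:ℝ)) * ENNReal.ofReal r ^ (1 - 1/(m:ℝ)))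
      + 2 * (ENNReal.ofReal r ^ 2 * D u (Ico a (a+L)) x) := by
  set I := Ico a (a+L) with hI
  -- choose the subinterval J
  obtain ⟨J, hJm, hJI, hvol, hdist⟩ :
      ∃ J : Set ℝ, MeasurableSet J ∧ J ⊆ I ∧ volume J = ENNReal.ofReal r ∧
        ∀ y ∈ J, (x - y)^2 ≤ r^2 := by
    by_cases hc : x + r ≤ a + L
    · refine ⟨Ico x (x+r), measurableSet_Ico, ?_, by simp, ?_⟩
      · exact Ico_subset_Ico hx.1 hc
      · rintro y ⟨h1, h2⟩
        apply sq_le_sq' <;> nlinarith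
    · refine ⟨Ico (x-r) x, measurableSet_Ico, ?_, by simp, ?_⟩
      · apply Ico_subset_Ico
        · push_neg at hc
          have := hx.2
          nlinarith
        · exact hx.2.le
      · rintro y ⟨h1, h2⟩
        apply sq_le_sq' <;> nlinarith
  -- pointwise inequality on J
  have hpt : ∀ y ∈ J, W u x ≤ 2 * W u y + 2 * (ENNReal.ofReal r ^ 2 * G u x y) := by
    intro y hy
    have hq : 0 ≤ (u x - u y)^2/(x-y)^2 := by positivity
    have hreal : (u x)^2 ≤ 2 * (u y)^2 + 2 * (r^2 * ((u x - u y)^2/(x-y)^2)) := by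
      by_cases hxy : x = y
      · subst hxy; nlinarith
      · have hne : (x - y)^2 ≠ 0 := by
          have : x - y ≠ 0 := sub_ne_zero.2 hxy
          positivity
        have hcancel : (u x - u y)^2 = (x-y)^2 * ((u x - u y)^2/(x-y)^2) := by
          field_simp
        have hd := hdist y hy
        nlinarith [sq_nonneg (u y - (u x - u y)), hcancel,
          mul_le_mul_of_nonneg_right hd hq]
    calc W u x ≤ ENNReal.ofReal (2 * (u y)^2 + 2 * (r^2 * ((u x - u y)^2/(x-y)^2))) :=
          ENNReal.ofReal_le_ofReal hreal
      _ = 2 * W u y + 2 * (ENNReal.ofReal r ^ 2 * G u x y) := by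
          rw [ENNReal.ofReal_add (by positivity) (by positivity),
            ENNReal.ofReal_mul (by norm_num), ENNReal.ofReal_mul (by norm_num),
            ENNReal.ofReal_mul (by positivity)]
          rw [ENNReal.ofReal_pow hr.le]
          norm_num [W, G]
  -- integrate over J
  have hW := meas_W hu
  calc W u x * ENNReal.ofReal r = ∫⁻ _ in J, W u x := by rw [setLIntegral_const, hvol]
    _ ≤ ∫⁻ y in J, (2 * W u y + 2 * (ENNReal.ofReal r ^ 2 * G u x y)) := by
        apply setLIntegral_mono
        · exact ((hW.const_mul 2).add (((meas_G_right hu x).const_mul _).const_mul 2))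
        · exact hpt
    _ = 2 * (∫⁻ y in J, W u y) + 2 * (ENNReal.ofReal r ^ 2 * ∫⁻ y in J, G u x y) := by
        rw [lintegral_add_left (hW.const_mul 2), lintegral_const_mul 2 hW,
          lintegral_const_mul _ ((meas_G_right hu x).const_mul _),
          lintegral_const_mul _ (meas_G_right hu x)]
    _ ≤ 2 * ((∫⁻ y in I, W u y ^ m) ^ (1/(m:ℝ)) * ENNReal.ofReal r ^ (1 - 1/(m:ℝ)))
      + 2 * (ENNReal.ofReal r ^ 2 * D u I x) := by
        gcongr 2 * ?_ + 2 * (_ * ?_)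
        · calc ∫⁻ y in J, W u y
              ≤ (∫⁻ y in J, W u y ^ m) ^ (1/(m:ℝ)) * (volume J) ^ (1 - 1/(m:ℝ)) := by
                simpa [Measure.restrict_apply_univ] using
                  lintegral_le_pow_mul (μ := volume.restrict J) hW.aemeasurable hm
            _ ≤ (∫⁻ y in I, W u y ^ m) ^ (1/(m:ℝ)) * ENNReal.ofReal r ^ (1 - 1/(m:ℝ)) := by
                rw [hvol]
                exact mul_le_mul'
                  (ENNReal.rpow_le_rpow (lintegral_mono_set hJI) (by positivity)) le_rfl
        · exact lintegral_mono_set hJI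


lemma rpow_ne_zero' {x : ENNReal} (h0 : x ≠ 0) (ht : x ≠ ⊤) (y : ℝ) : x ^ y ≠ 0 := by
  simp [ENNReal.rpow_eq_zero_iff, h0, ht]

lemma rpow_ne_top' {x : ENNReal} (h0 : x ≠ 0) (ht : x ≠ ⊤) (y : ℝ) : x ^ y ≠ ⊤ := by
  simp [ENNReal.rpow_eq_top_iff, h0, ht]

lemma rpow_mul_self {x : ENNReal} (h0 : x ≠ 0) (ht : x ≠ ⊤) (e : ℝ) :
    x ^ e * x = x ^ (e+1) := by
  nth_rewrite 2 [← ENNReal.rpow_one x]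
  rw [← ENNReal.rpow_add _ _ h0 ht]

/-- Optimization over the scale `ρ`. -/
lemma opt {t d β w : ENNReal} (ht0 : t ≠ 0) (htt : t ≠ ⊤) (hβ0 : β ≠ 0) (hβt : β ≠ ⊤)
    {m : ℕ} (hm : 1 ≤ m)
    (hstar : ∀ ρ : ENNReal, ρ ≠ 0 → ρ ≠ ⊤ → ρ ≤ β →
      w * ρ ≤ 2 * (t * ρ ^ (1 - 1/(m:ℝ))) + 2 * (ρ^2 * d)) :
    w ≤ 4 * (t ^ ((m:ℝ)/((m:ℝ)+1)) * d ^ (1/((m:ℝ)+1)))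
      + 4 * (t * β ^ (-(1/(m:ℝ)))) := by
  have hm0 : (m:ℝ) ≠ 0 := by positivity
  have hm10 : (m:ℝ) + 1 ≠ 0 := by positivity
  have hβpow : ∀ e₁ e₂ : ℝ, β ^ e₁ * β ^ e₂ = β ^ (e₁+e₂) :=
    fun e₁ e₂ => (ENNReal.rpow_add _ _ hβ0 hβt).symm
  have hβsq : β^2 = β ^ (2:ℝ) := by
    rw [← ENNReal.rpow_natCast β 2]; norm_num
  by_cases hdt : d = ⊤
  · subst hdt
    rw [ENNReal.top_rpow_of_pos (by positivity),
      ENNReal.mul_top (rpow_ne_zero' ht0 htt _),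
      ENNReal.mul_top (by norm_num), top_add]
    exact le_top
  by_cases hds : d ≤ t * β ^ (-(((m:ℝ)+1)/(m:ℝ)))
  -- Case A : d is small, take ρ = β
  · have h := hstar β hβ0 hβt le_rfl
    have hcalc : 2 * (t * β ^ (1 - 1/(m:ℝ))) + 2 * (β^2 * d)
        ≤ (4 * (t * β ^ (-(1/(m:ℝ))))) * β := by
      have hβ2 : β^2 * (t * β ^ (-(((m:ℝ)+1)/(m:ℝ)))) = t * β ^ (1 - 1/(m:ℝ)) := by
        rw [hβsq, mul_comm (β ^ (2:ℝ)), mul_assoc, hβpow]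
        congr 2
        field_simp
        ring
      calc 2 * (t * β ^ (1 - 1/(m:ℝ))) + 2 * (β^2 * d)
          ≤ 2 * (t * β ^ (1 - 1/(m:ℝ))) + 2 * (β^2 * (t * β ^ (-(((m:ℝ)+1)/(m:ℝ))))) := by
            gcongr
        _ = 4 * (t * β ^ (1 - 1/(m:ℝ))) := by rw [hβ2]; ring
        _ = (4 * (t * β ^ (-(1/(m:ℝ))))) * β := by
            rw [mul_assoc 4, mul_assoc t, rpow_mul_self hβ0 hβt]
            congr 3
            ring
    have hw := (ENNReal.mul_le_mul_iff_left hβ0 hβt).1 (h.trans hcalc)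
    exact hw.trans le_add_self
  -- Case B : d is large, optimize
  · push_neg at hds
    have hd0 : d ≠ 0 := by
      intro h
      rw [h] at hds
      simp at hds
    set a : ℝ := (m:ℝ)/((m:ℝ)+1) with ha
    have hP : ∀ e₁ e₂ f₁ f₂ : ℝ, (t ^ e₁ * d ^ e₂) * (t ^ f₁ * d ^ f₂)
        = t ^ (e₁+f₁) * d ^ (e₂+f₂) := by
      intro e₁ e₂ f₁ f₂
      rw [ENNReal.rpow_add _ _ ht0 htt, ENNReal.rpow_add _ _ hd0 hdt]
      ring
    have hPr : ∀ e₁ e₂ s : ℝ, (t ^ e₁ * d ^ e₂) ^ s = t ^ (e₁*s) * d ^ (e₂*s) := by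
      intro e₁ e₂ s
      rw [ENNReal.mul_rpow_of_ne_top (rpow_ne_top' ht0 htt _) (rpow_ne_top' hd0 hdt _),
        ← ENNReal.rpow_mul, ← ENNReal.rpow_mul]
    set ρ : ENNReal := t ^ a * d ^ (-a) with hρ
    have hρ0 : ρ ≠ 0 := mul_ne_zero (rpow_ne_zero' ht0 htt _) (rpow_ne_zero' hd0 hdt _)
    have hρt : ρ ≠ ⊤ := ENNReal.mul_ne_top (rpow_ne_top' ht0 htt _) (rpow_ne_top' hd0 hdt _)
    have hρβ : ρ ≤ β := by
      have h1 : d ^ (-a) ≤ (t * β ^ (-(((m:ℝ)+1)/(m:ℝ)))) ^ (-a) := by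
        rw [ENNReal.rpow_neg, ENNReal.rpow_neg]
        exact ENNReal.inv_le_inv.2 (ENNReal.rpow_le_rpow hds.le (by positivity))
      calc ρ ≤ t ^ a * (t * β ^ (-(((m:ℝ)+1)/(m:ℝ)))) ^ (-a) := mul_le_mul' le_rfl h1
        _ = (t ^ a * t ^ (-a)) * (β ^ (-(((m:ℝ)+1)/(m:ℝ)))) ^ (-a) := by
            rw [ENNReal.mul_rpow_of_ne_top htt (rpow_ne_top' hβ0 hβt _)]
            ring
        _ = β := by
            rw [← ENNReal.rpow_add _ _ ht0 htt, add_neg_cancel, ENNReal.rpow_zero, one_mul,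
              ← ENNReal.rpow_mul]
            rw [show -(((m:ℝ)+1)/(m:ℝ)) * (-a) = 1 from by rw [ha]; field_simp,
              ENNReal.rpow_one]
    have h := hstar ρ hρ0 hρt hρβ
    have hcalc : 2 * (t * ρ ^ (1 - 1/(m:ℝ))) + 2 * (ρ^2 * d)
        ≤ (4 * (t ^ a * d ^ (1-a))) * ρ := by
      apply le_of_eq
      have e1 : t * ρ ^ (1 - 1/(m:ℝ)) = t ^ (2*a) * d ^ (1-2*a) := by
        rw [hρ, hPr]
        nth_rewrite 1 [show t = t ^ (1:ℝ) * d ^ (0:ℝ) from by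
          rw [ENNReal.rpow_one, ENNReal.rpow_zero, mul_one]]
        rw [hP]
        congr 2 <;> (rw [ha]; field_simp; ring)
      have e2 : ρ^2 * d = t ^ (2*a) * d ^ (1-2*a) := by
        rw [sq, hρ, hP, mul_assoc, rpow_mul_self hd0 hdt]
        congr 2 <;> (rw [ha]; ring)
      have e3 : (4 * (t ^ a * d ^ (1-a))) * ρ = 4 * (t ^ (2*a) * d ^ (1-2*a)) := by
        rw [hρ, mul_assoc, hP]
        congr 3 <;> ring
      rw [e1, e2, e3]
      ring
    have hw := (ENNReal.mul_le_mul_iff_left hρ0 hρt).1 (h.trans hcalc)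
    have hfin : t ^ a * d ^ (1-a) = t ^ ((m:ℝ)/((m:ℝ)+1)) * d ^ (1/((m:ℝ)+1)) := by
      rw [ha]
      congr 2
      field_simp
      ring
    exact le_add_right (hfin ▸ hw)


lemma rpow_pow (X : ENNReal) (e : ℝ) (k : ℕ) : (X ^ e) ^ k = X ^ (e * k) := by
  rw [← ENNReal.rpow_natCast (X ^ e) k, ← ENNReal.rpow_mul]

/-- Pointwise bound from `star` + `opt`. -/
lemma pw {u : ℝ → ℝ} (hu : Measurable u) {a L : ℝ} (hL : 0 < L) {m : ℕ} (hm : 1 ≤ m)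
    (hT0 : (∫⁻ y in Ico a (a+L), W u y ^ m) ≠ 0)
    (hTt : (∫⁻ y in Ico a (a+L), W u y ^ m) ≠ ⊤)
    {x : ℝ} (hx : x ∈ Ico a (a+L)) :
    W u x ≤ 4 * ((∫⁻ y in Ico a (a+L), W u y ^ m) ^ (1/((m:ℝ)+1))
        * D u (Ico a (a+L)) x ^ (1/((m:ℝ)+1)))
      + 4 * ((∫⁻ y in Ico a (a+L), W u y ^ m) ^ (1/(m:ℝ))
        * (ENNReal.ofReal (L/2)) ^ (-(1/(m:ℝ)))) := by
  have hm0 : (m:ℝ) ≠ 0 := by positivity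
  set T := ∫⁻ y in Ico a (a+L), W u y ^ m with hT
  have hβ0 : ENNReal.ofReal (L/2) ≠ 0 := by
    simp [ENNReal.ofReal_eq_zero]; linarith
  have hβt : ENNReal.ofReal (L/2) ≠ ⊤ := ENNReal.ofReal_ne_top
  have h := opt (w := W u x) (t := T ^ (1/(m:ℝ))) (d := D u (Ico a (a+L)) x)
    (rpow_ne_zero' hT0 hTt _) (rpow_ne_top' hT0 hTt _) hβ0 hβt hm ?_
  · calc W u x ≤ 4 * ((T ^ (1/(m:ℝ))) ^ ((m:ℝ)/((m:ℝ)+1)) * D u (Ico a (a+L)) x ^ (1/((m:ℝ)+1)))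
        + 4 * (T ^ (1/(m:ℝ)) * (ENNReal.ofReal (L/2)) ^ (-(1/(m:ℝ)))) := h
      _ = _ := by
        rw [← ENNReal.rpow_mul]
        congr 3
        field_simp
  · intro ρ hρ0 hρt hρβ
    have hr : 0 < ρ.toReal := ENNReal.toReal_pos hρ0 hρt
    have hrL : ρ.toReal ≤ L/2 := by
      have := ENNReal.toReal_mono hβt hρβ
      rwa [ENNReal.toReal_ofReal (by linarith)] at this
    have hs := star hu hx hr hrL hm
    rwa [ENNReal.ofReal_toReal hρt] at hs

/-- The key interval estimate. -/
lemma key {u : ℝ → ℝ} (hu : Measurable u) {a L : ℝ} (hL : 0 < L) {m : ℕ} (hm : 1 ≤ m)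
    (hTt : (∫⁻ y in Ico a (a+L), W u y ^ m) ≠ ⊤) :
    ∫⁻ x in Ico a (a+L), W u x ^ (m+1)
      ≤ 8^(m+1) * ((∫⁻ y in Ico a (a+L), W u y ^ m)
          * (∫⁻ x in Ico a (a+L), D u (Ico a (a+L)) x)
        + (∫⁻ y in Ico a (a+L), W u y ^ m) ^ (((m:ℝ)+1)/(m:ℝ))
          * ((ENNReal.ofReal (L/2)) ^ (-(((m:ℝ)+1)/(m:ℝ))) * ENNReal.ofReal L)) := by
  have hm0 : (m:ℝ) ≠ 0 := by positivity
  have hm10 : (m:ℝ) + 1 ≠ 0 := by positivity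
  set I := Ico a (a+L) with hI
  set T := ∫⁻ y in I, W u y ^ m with hT
  by_cases hT0 : T = 0
  · have hWm : (fun y => W u y ^ m) =ᵐ[volume.restrict I] 0 :=
      (lintegral_eq_zero_iff ((meas_W hu).pow_const m)).1 hT0
    have hW1 : (fun y => W u y ^ (m+1)) =ᵐ[volume.restrict I] 0 := by
      filter_upwards [hWm] with y hy
      simp only [Pi.zero_apply] at hy ⊢
      have : W u y = 0 := by
        exact pow_eq_zero_iff (Nat.one_le_iff_ne_zero.1 hm) |>.1 hy
      simp [this]
    rw [lintegral_congr_ae hW1]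
    simp
  · set β := ENNReal.ofReal (L/2) with hβ
    set Dx := D u I with hDx
    have hpt : ∀ x ∈ I, W u x ^ (m+1) ≤
        2^(m+1) * ((4 * (T ^ (1/((m:ℝ)+1)) * Dx x ^ (1/((m:ℝ)+1))))^(m+1)
          + (4 * (T ^ (1/(m:ℝ)) * β ^ (-(1/(m:ℝ)))))^(m+1)) := by
      intro x hx
      calc W u x ^ (m+1)
          ≤ (4 * (T ^ (1/((m:ℝ)+1)) * Dx x ^ (1/((m:ℝ)+1)))
            + 4 * (T ^ (1/(m:ℝ)) * β ^ (-(1/(m:ℝ)))))^(m+1) := by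
            gcongr
            exact pw hu hL hm hT0 hTt hx
        _ ≤ _ := add_pow_le _ _ (m+1)
    have hmeas : Measurable fun x =>
        2^(m+1) * ((4 * (T ^ (1/((m:ℝ)+1)) * Dx x ^ (1/((m:ℝ)+1))))^(m+1)
          + (4 * (T ^ (1/(m:ℝ)) * β ^ (-(1/(m:ℝ)))))^(m+1)) := by
      apply Measurable.const_mul
      apply Measurable.add
      · apply Measurable.pow_const
        apply Measurable.const_mul
        exact (((meas_D hu I).pow measurable_const).const_mul _)
      · exact measurable_const
    have hα : (1/((m:ℝ)+1)) * ((m+1 : ℕ):ℝ) = 1 := by push_cast; field_simp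
    have hF : ∀ x, (4 * (T ^ (1/((m:ℝ)+1)) * Dx x ^ (1/((m:ℝ)+1))))^(m+1)
        = 4^(m+1) * (T * Dx x) := by
      intro x
      rw [mul_pow, mul_pow, rpow_pow, rpow_pow, hα, ENNReal.rpow_one, ENNReal.rpow_one]
    have hc : (4 * (T ^ (1/(m:ℝ)) * β ^ (-(1/(m:ℝ)))))^(m+1)
        = 4^(m+1) * (T ^ (((m:ℝ)+1)/(m:ℝ)) * β ^ (-(((m:ℝ)+1)/(m:ℝ)))) := by
      rw [mul_pow, mul_pow, rpow_pow, rpow_pow]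
      congr 2 <;> (push_cast; field_simp)
    calc ∫⁻ x in I, W u x ^ (m+1)
        ≤ ∫⁻ x in I, 2^(m+1) * ((4 * (T ^ (1/((m:ℝ)+1)) * Dx x ^ (1/((m:ℝ)+1))))^(m+1)
          + (4 * (T ^ (1/(m:ℝ)) * β ^ (-(1/(m:ℝ)))))^(m+1)) := setLIntegral_mono hmeas hpt
      _ = ∫⁻ x in I, (2^(m+1) * 4^(m+1)) * (T * Dx x)
          + 2^(m+1) * (4^(m+1) * (T ^ (((m:ℝ)+1)/(m:ℝ)) * β ^ (-(((m:ℝ)+1)/(m:ℝ))))) := by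
          apply lintegral_congr
          intro x
          rw [hF x, hc]
          ring
      _ = (2^(m+1) * 4^(m+1)) * (T * ∫⁻ x in I, Dx x)
          + 2^(m+1) * (4^(m+1) * (T ^ (((m:ℝ)+1)/(m:ℝ)) * β ^ (-(((m:ℝ)+1)/(m:ℝ))))) * volume I := by
          rw [lintegral_add_right _ measurable_const, setLIntegral_const,
            lintegral_const_mul _ ((meas_D hu I).const_mul T),
            lintegral_const_mul _ (meas_D hu I)]
      _ = 8^(m+1) * (T * (∫⁻ x in I, Dx x)
          + T ^ (((m:ℝ)+1)/(m:ℝ)) * (β ^ (-(((m:ℝ)+1)/(m:ℝ))) * ENNReal.ofReal L)) := by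
          rw [show ((8:ENNReal))^(m+1) = 2^(m+1) * 4^(m+1) from by rw [← mul_pow]; norm_num,
            show volume I = ENNReal.ofReal L from by
              rw [hI, Real.volume_Ico, add_sub_cancel_left]]
          ring


/-- The covering intervals. -/
def Ik (L : ℝ) (k : ℤ) : Set ℝ := Ico (k*L) (k*L + L)

lemma Ik_disj {L : ℝ} (hL : 0 < L) : Pairwise (Function.onFun Disjoint (Ik L)) := by
  intro k j hkj
  rw [Function.onFun, Ik, Ik, Set.Ico_disjoint_Ico]
  rcases lt_or_gt_of_ne hkj with h | h
  · have : (k:ℝ) + 1 ≤ j := by exact_mod_cast h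
    calc min ((k:ℝ)*L + L) ((j:ℝ)*L + L) ≤ (k:ℝ)*L + L := min_le_left _ _
      _ ≤ (j:ℝ)*L := by nlinarith
      _ ≤ max ((k:ℝ)*L) ((j:ℝ)*L) := le_max_right _ _
  · have : (j:ℝ) + 1 ≤ k := by exact_mod_cast h
    calc min ((k:ℝ)*L + L) ((j:ℝ)*L + L) ≤ (j:ℝ)*L + L := min_le_right _ _
      _ ≤ (k:ℝ)*L := by nlinarith
      _ ≤ max ((k:ℝ)*L) ((j:ℝ)*L) := le_max_left _ _

lemma Ik_union {L : ℝ} (hL : 0 < L) : (⋃ k : ℤ, Ik L k) = univ := by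
  ext x
  simp only [mem_iUnion, mem_univ, iff_true, Ik, mem_Ico]
  refine ⟨⌊x / L⌋, ?_, ?_⟩
  · calc ((⌊x / L⌋ : ℤ):ℝ) * L ≤ (x / L) * L :=
        mul_le_mul_of_nonneg_right (Int.floor_le _) hL.le
      _ = x := div_mul_cancel₀ x hL.ne'
  · have h2 : x < ((⌊x / L⌋ : ℝ) + 1) * L := (div_lt_iff₀ hL).1 (Int.lt_floor_add_one _)
    nlinarith

lemma sum_eq {L : ℝ} (hL : 0 < L) (f : ℝ → ENNReal) :
    ∑' k : ℤ, ∫⁻ x in Ik L k, f x = ∫⁻ x, f x := by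
  simp only [Ik]
  rw [← lintegral_iUnion (fun k => measurableSet_Ico) (Ik_disj hL) f]
  have h := Ik_union hL
  simp only [Ik] at h
  rw [h, Measure.restrict_univ]

lemma gagliardo_eq (u : ℝ → ℝ) : gagliardoSq u = ∫⁻ x, ∫⁻ y, G u x y := rfl

lemma sumG_le {u : ℝ → ℝ} {L : ℝ} (hL : 0 < L) :
    ∑' k : ℤ, (∫⁻ x in Ik L k, D u (Ik L k) x) ≤ gagliardoSq u := by
  calc ∑' k : ℤ, (∫⁻ x in Ik L k, D u (Ik L k) x)
      ≤ ∑' k : ℤ, (∫⁻ x in Ik L k, ∫⁻ y, G u x y) := by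
        apply ENNReal.tsum_le_tsum
        intro k
        apply lintegral_mono
        intro x
        exact setLIntegral_le_lintegral _ _
    _ = ∫⁻ x, ∫⁻ y, G u x y := sum_eq hL _
    _ = gagliardoSq u := (gagliardo_eq u).symm

lemma G_single_le (u : ℝ → ℝ) (s : Set ℝ) :
    ∫⁻ x in s, D u s x ≤ gagliardoSq u := by
  calc ∫⁻ x in s, D u s x ≤ ∫⁻ x in s, ∫⁻ y, G u x y := by
        apply lintegral_mono
        intro x
        exact setLIntegral_le_lintegral _ _
    _ ≤ ∫⁻ x, ∫⁻ y, G u x y := setLIntegral_le_lintegral _ _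
    _ = gagliardoSq u := (gagliardo_eq u).symm

/-- The inductive step estimate, with a uniform bound `ε` on the local masses. -/
lemma step {u : ℝ → ℝ} (hu : Measurable u) {L : ℝ} (hL : 0 < L) {m : ℕ} (hm : 1 ≤ m)
    {Mg : ENNReal} (hg : gagliardoSq u ≤ Mg)
    (hA : (∑' k : ℤ, ∫⁻ x in Ik L k, W u x ^ m) ≠ ⊤)
    {ε : ENNReal} (hε : ∀ k : ℤ, (∫⁻ x in Ik L k, W u x ^ m) ≤ ε) :
    ∑' k : ℤ, ∫⁻ x in Ik L k, W u x ^ (m+1)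
      ≤ 8^(m+1) * (ε * Mg
        + (ε ^ (1/(m:ℝ)) * (∑' k : ℤ, ∫⁻ x in Ik L k, W u x ^ m))
          * ((ENNReal.ofReal (L/2)) ^ (-(((m:ℝ)+1)/(m:ℝ))) * ENNReal.ofReal L)) := by
  set A := ∑' k : ℤ, ∫⁻ x in Ik L k, W u x ^ m with hA'
  have hTk : ∀ k : ℤ, (∫⁻ x in Ik L k, W u x ^ m) ≤ A := fun k => ENNReal.le_tsum k
  have hTkt : ∀ k : ℤ, (∫⁻ x in Ik L k, W u x ^ m) ≠ ⊤ :=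
    fun k => fun h => hA (eq_top_iff.2 (h ▸ hTk k))
  calc ∑' k : ℤ, ∫⁻ x in Ik L k, W u x ^ (m+1)
      ≤ ∑' k : ℤ, 8^(m+1) * ((∫⁻ y in Ik L k, W u y ^ m)
          * (∫⁻ x in Ik L k, D u (Ik L k) x)
        + (∫⁻ y in Ik L k, W u y ^ m) ^ (((m:ℝ)+1)/(m:ℝ))
          * ((ENNReal.ofReal (L/2)) ^ (-(((m:ℝ)+1)/(m:ℝ))) * ENNReal.ofReal L)) := by
        apply ENNReal.tsum_le_tsum
        intro k
        exact key hu hL hm (hTkt k)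
    _ = 8^(m+1) * ((∑' k : ℤ, (∫⁻ y in Ik L k, W u y ^ m)
          * (∫⁻ x in Ik L k, D u (Ik L k) x))
        + (∑' k : ℤ, (∫⁻ y in Ik L k, W u y ^ m) ^ (((m:ℝ)+1)/(m:ℝ)))
          * ((ENNReal.ofReal (L/2)) ^ (-(((m:ℝ)+1)/(m:ℝ))) * ENNReal.ofReal L)) := by
        rw [ENNReal.tsum_mul_left, ENNReal.tsum_add, ENNReal.tsum_mul_right]
    _ ≤ 8^(m+1) * (ε * Mg
        + (ε ^ (1/(m:ℝ)) * A)
          * ((ENNReal.ofReal (L/2)) ^ (-(((m:ℝ)+1)/(m:ℝ))) * ENNReal.ofReal L)) := by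
        gcongr 8^(m+1) * (?_ + ?_ * _)
        · calc ∑' k : ℤ, (∫⁻ y in Ik L k, W u y ^ m) * (∫⁻ x in Ik L k, D u (Ik L k) x)
              ≤ ∑' k : ℤ, ε * (∫⁻ x in Ik L k, D u (Ik L k) x) := by
                apply ENNReal.tsum_le_tsum
                intro k
                exact mul_le_mul' (hε k) le_rfl
            _ = ε * ∑' k : ℤ, (∫⁻ x in Ik L k, D u (Ik L k) x) := ENNReal.tsum_mul_left
            _ ≤ ε * Mg := mul_le_mul' le_rfl ((sumG_le hL).trans hg)
        · calc ∑' k : ℤ, (∫⁻ y in Ik L k, W u y ^ m) ^ (((m:ℝ)+1)/(m:ℝ))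
              ≤ ∑' k : ℤ, ε ^ (1/(m:ℝ)) * (∫⁻ y in Ik L k, W u y ^ m) := by
                apply ENNReal.tsum_le_tsum
                intro k
                set T := ∫⁻ y in Ik L k, W u y ^ m with hT
                by_cases hT0 : T = 0
                · rw [hT0, ENNReal.zero_rpow_of_pos (by positivity), mul_zero]
                · have : T ^ (((m:ℝ)+1)/(m:ℝ)) = T ^ (1/(m:ℝ)) * T := by
                    rw [show ((m:ℝ)+1)/(m:ℝ) = 1/(m:ℝ) + 1 from by
                        field_simp; ring,
                      ENNReal.rpow_add _ _ hT0 (hTkt k), ENNReal.rpow_one]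
                  rw [this]
                  exact mul_le_mul' (ENNReal.rpow_le_rpow (hε k) (by positivity)) le_rfl
            _ = ε ^ (1/(m:ℝ)) * A := ENNReal.tsum_mul_left


/-- Local masses are bounded by the vanishing supremum. -/
lemma eps_le {u : ℝ → ℝ} (hu : Measurable u) {R : ℝ} (hR : 0 < R)
    (hfin : (∫⁻ x, W u x) ≠ ⊤) (k : ℤ) :
    (∫⁻ x in Ik (2*R) k, W u x ^ 1)
      ≤ ENNReal.ofReal (⨆ y : ℝ, ∫ x in Ioo (y - R) (y + R), (u x) ^ 2) := by
  have hnn : (0:ℝ→ℝ) ≤ᵐ[volume] fun x => (u x)^2 := ae_of_all _ fun x => sq_nonneg _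
  have hInt : Integrable (fun x => (u x)^2) := by
    constructor
    · exact (hu.pow_const 2).aestronglyMeasurable
    · rw [hasFiniteIntegral_iff_ofReal hnn]
      exact lt_top_iff_ne_top.2 hfin
  have h1 : (∫⁻ x in Ik (2*R) k, W u x ^ 1)
      = ∫⁻ x in Ioo ((k:ℝ)*(2*R)) ((k:ℝ)*(2*R)+2*R), W u x := by
    simp only [pow_one, Ik]
    exact (setLIntegral_congr Ioo_ae_eq_Ico).symm
  have h2 : ∫⁻ x in Ioo ((k:ℝ)*(2*R)) ((k:ℝ)*(2*R)+2*R), W u x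
      = ENNReal.ofReal (∫ x in Ioo ((k:ℝ)*(2*R)) ((k:ℝ)*(2*R)+2*R), (u x)^2) :=
    (ofReal_integral_eq_lintegral_ofReal hInt.restrict
      (ae_restrict_of_ae hnn)).symm
  have hbdd : BddAbove (range fun y : ℝ => ∫ x in Ioo (y-R) (y+R), (u x)^2) := by
    refine ⟨∫ x, (u x)^2, ?_⟩
    rintro v ⟨y, rfl⟩
    exact setIntegral_le_integral hInt hnn
  have h3 := le_ciSup hbdd ((k:ℝ)*(2*R) + R)
  have hset : Ioo ((k:ℝ)*(2*R) + R - R) ((k:ℝ)*(2*R) + R + R)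
      = Ioo ((k:ℝ)*(2*R)) ((k:ℝ)*(2*R)+2*R) := by congr 1 <;> ring
  rw [h1, h2]
  apply ENNReal.ofReal_le_ofReal
  rw [hset] at h3
  exact h3

/-- The main induction: all even-power integrals vanish. -/
lemma main_tendsto (u : ℕ → ℝ → ℝ) (hmeas : ∀ n, Measurable (u n))
    (M : ENNReal) (hM : M ≠ ⊤)
    (hbound : ∀ n, (∫⁻ x : ℝ, W (u n) x) + gagliardoSq (u n) ≤ M)
    (R : ℝ) (hR : 0 < R)
    (hvanish : Tendsto
      (fun n => ⨆ y : ℝ, ∫ x in Set.Ioo (y - R) (y + R), (u n x) ^ 2)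
      atTop (nhds 0)) :
    ∀ m : ℕ, 2 ≤ m →
      Tendsto (fun n => ∑' k : ℤ, ∫⁻ x in Ik (2*R) k, W (u n) x ^ m) atTop (nhds 0)
      ∧ ∀ n, (∑' k : ℤ, ∫⁻ x in Ik (2*R) k, W (u n) x ^ m) ≠ ⊤ := by
  have hL : 0 < 2*R := by linarith
  have hWM : ∀ n, (∫⁻ x, W (u n) x) ≤ M := fun n => le_self_add.trans (hbound n)
  have hg : ∀ n, gagliardoSq (u n) ≤ M := fun n => le_add_self.trans (hbound n)
  have hA1 : ∀ n, (∑' k : ℤ, ∫⁻ x in Ik (2*R) k, W (u n) x ^ 1) ≤ M := by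
    intro n
    rw [sum_eq hL]
    simpa [pow_one] using hWM n
  have hA1t : ∀ n, (∑' k : ℤ, ∫⁻ x in Ik (2*R) k, W (u n) x ^ 1) ≠ ⊤ :=
    fun n => ((hA1 n).trans_lt (lt_top_iff_ne_top.2 hM)).ne
  set ε : ℕ → ENNReal :=
    fun n => ENNReal.ofReal (⨆ y : ℝ, ∫ x in Ioo (y - R) (y + R), (u n x) ^ 2) with hε'
  have hεk : ∀ n (k : ℤ), (∫⁻ x in Ik (2*R) k, W (u n) x ^ 1) ≤ ε n := by
    intro n k
    exact eps_le (hmeas n) hR ((hWM n).trans_lt (lt_top_iff_ne_top.2 hM)).ne k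
  have hεt : ∀ n, ε n ≠ ⊤ := fun n => ENNReal.ofReal_ne_top
  have hε0 : Tendsto ε atTop (nhds 0) := by
    have := ENNReal.tendsto_ofReal (a := 0) hvanish
    simpa using this
  -- a generic bound-and-squeeze principle
  have squeeze : ∀ (f g : ℕ → ENNReal) (K : ENNReal), K ≠ ⊤ →
      Tendsto g atTop (nhds 0) → (∀ᶠ n in atTop, f n ≤ g n * K) →
      Tendsto f atTop (nhds 0) := by
    intro f g K hK hg0 hfg
    have h1 : Tendsto (fun n => g n * K) atTop (nhds 0) := by
      have := ENNReal.Tendsto.mul_const hg0 (Or.inr hK)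
      simpa using this
    exact tendsto_of_tendsto_of_tendsto_of_le_of_le' tendsto_const_nhds h1
      (Eventually.of_forall fun n => zero_le) hfg
  intro m hm
  induction m, hm using Nat.le_induction with
  | base =>
    -- m = 2 : use step with m = 1, ε = ε n
    have hb : ∀ n, (∑' k : ℤ, ∫⁻ x in Ik (2*R) k, W (u n) x ^ 2)
        ≤ ε n * (8^2 * (M + M * ((ENNReal.ofReal (2*R/2)) ^ (-(((1:ℕ):ℝ)+1)/((1:ℕ):ℝ))
          * ENNReal.ofReal (2*R)))) := by
      intro n
      have h := step (hmeas n) hL le_rfl (hg n) (hA1t n) (hεk n)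
      calc ∑' k : ℤ, ∫⁻ x in Ik (2*R) k, W (u n) x ^ 2
          = ∑' k : ℤ, ∫⁻ x in Ik (2*R) k, W (u n) x ^ (1+1) := by norm_num
        _ ≤ 8^(1+1) * (ε n * M
            + (ε n ^ (1/((1:ℕ):ℝ)) * (∑' k : ℤ, ∫⁻ x in Ik (2*R) k, W (u n) x ^ 1))
              * ((ENNReal.ofReal (2*R/2)) ^ (-((((1:ℕ):ℝ)+1)/((1:ℕ):ℝ))) * ENNReal.ofReal (2*R))) := h
        _ ≤ 8^(1+1) * (ε n * M
            + (ε n * M)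
              * ((ENNReal.ofReal (2*R/2)) ^ (-((((1:ℕ):ℝ)+1)/((1:ℕ):ℝ))) * ENNReal.ofReal (2*R))) := by
            gcongr
            · norm_num
            · exact hA1 n
        _ ≤ _ := by
            rw [show ((1:ℕ):ℝ) = (1:ℝ) from by norm_num]
            ring_nf
            exact le_rfl
    constructor
    · apply squeeze _ ε _ ?_ hε0 (Eventually.of_forall hb)
      have hc : (ENNReal.ofReal (2*R/2)) ^ (-(((1:ℕ):ℝ)+1)/((1:ℕ):ℝ)) ≠ ⊤ := by
        apply rpow_ne_top'
        · simp [ENNReal.ofReal_eq_zero]; linarith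
        · exact ENNReal.ofReal_ne_top
      exact ENNReal.mul_ne_top (by norm_num)
        (ENNReal.add_ne_top.2 ⟨hM, ENNReal.mul_ne_top hM
          (ENNReal.mul_ne_top hc ENNReal.ofReal_ne_top)⟩)
    · intro n
      refine ((hb n).trans_lt (lt_top_iff_ne_top.2 ?_)).ne
      apply ENNReal.mul_ne_top (hεt n)
      have hc : (ENNReal.ofReal (2*R/2)) ^ (-(((1:ℕ):ℝ)+1)/((1:ℕ):ℝ)) ≠ ⊤ := by
        apply rpow_ne_top'
        · simp [ENNReal.ofReal_eq_zero]; linarith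
        · exact ENNReal.ofReal_ne_top
      exact ENNReal.mul_ne_top (by norm_num)
        (ENNReal.add_ne_top.2 ⟨hM, ENNReal.mul_ne_top hM
          (ENNReal.mul_ne_top hc ENNReal.ofReal_ne_top)⟩)
  | succ m hm2 ih =>
    obtain ⟨ihT, ihF⟩ := ih
    have hm1 : 1 ≤ m := le_trans (by norm_num) hm2
    set c : ENNReal := (ENNReal.ofReal (2*R/2)) ^ (-(((m:ℝ)+1)/(m:ℝ))) * ENNReal.ofReal (2*R)
      with hc'
    have hc : c ≠ ⊤ := by
      apply ENNReal.mul_ne_top ?_ ENNReal.ofReal_ne_top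
      apply rpow_ne_top'
      · simp [ENNReal.ofReal_eq_zero]; linarith
      · exact ENNReal.ofReal_ne_top
    have hb : ∀ n, (∑' k : ℤ, ∫⁻ x in Ik (2*R) k, W (u n) x ^ (m+1))
        ≤ 8^(m+1) * ((∑' k : ℤ, ∫⁻ x in Ik (2*R) k, W (u n) x ^ m) * M
          + ((∑' k : ℤ, ∫⁻ x in Ik (2*R) k, W (u n) x ^ m) ^ (1/(m:ℝ))
              * (∑' k : ℤ, ∫⁻ x in Ik (2*R) k, W (u n) x ^ m)) * c) := by
      intro n
      exact step (hmeas n) hL hm1 (hg n) (ihF n) (fun k => ENNReal.le_tsum k)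
    constructor
    · -- eventually the rpow factor is ≤ 1
      have hev : ∀ᶠ n in atTop,
          (∑' k : ℤ, ∫⁻ x in Ik (2*R) k, W (u n) x ^ (m+1))
            ≤ (∑' k : ℤ, ∫⁻ x in Ik (2*R) k, W (u n) x ^ m) * (8^(m+1) * (M + c)) := by
        filter_upwards [ENNReal.tendsto_nhds_zero.1 ihT 1 one_pos] with n h1
        calc (∑' k : ℤ, ∫⁻ x in Ik (2*R) k, W (u n) x ^ (m+1))
            ≤ 8^(m+1) * ((∑' k : ℤ, ∫⁻ x in Ik (2*R) k, W (u n) x ^ m) * M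
              + ((∑' k : ℤ, ∫⁻ x in Ik (2*R) k, W (u n) x ^ m) ^ (1/(m:ℝ))
                  * (∑' k : ℤ, ∫⁻ x in Ik (2*R) k, W (u n) x ^ m)) * c) := hb n
          _ ≤ 8^(m+1) * ((∑' k : ℤ, ∫⁻ x in Ik (2*R) k, W (u n) x ^ m) * M
              + (1 * (∑' k : ℤ, ∫⁻ x in Ik (2*R) k, W (u n) x ^ m)) * c) := by
              gcongr
              exact ENNReal.rpow_le_one h1 (by positivity)
          _ = (∑' k : ℤ, ∫⁻ x in Ik (2*R) k, W (u n) x ^ m) * (8^(m+1) * (M + c)) := by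
              ring
      apply squeeze _ _ _ ?_ ihT hev
      exact ENNReal.mul_ne_top (by exact (ENNReal.pow_ne_top (by norm_num))) (ENNReal.add_ne_top.2 ⟨hM, hc⟩)
    · intro n
      refine ((hb n).trans_lt (lt_top_iff_ne_top.2 ?_)).ne
      apply ENNReal.mul_ne_top (ENNReal.pow_ne_top (by norm_num))
      apply ENNReal.add_ne_top.2
      constructor
      · exact ENNReal.mul_ne_top (ihF n) hM
      · apply ENNReal.mul_ne_top ?_ hc
        exact ENNReal.mul_ne_top (ENNReal.rpow_ne_top_of_nonneg (by positivity) (ihF n)) (ihF n)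


end VanishAux

open VanishAux

/-- Fractional vanishing lemma of P.L. Lions in `H^{1/2}(ℝ)`. -/
theorem stmt_13 (u : ℕ → ℝ → ℝ) (hmeas : ∀ n, Measurable (u n))
    (M : ENNReal) (hM : M ≠ ⊤)
    (hbound : ∀ n,
      (∫⁻ x : ℝ, ENNReal.ofReal ((u n x) ^ 2)) + gagliardoSq (u n) ≤ M)
    (R : ℝ) (hR : 0 < R)
    (hvanish : Tendsto
      (fun n => ⨆ y : ℝ, ∫ x in Set.Ioo (y - R) (y + R), (u n x) ^ 2)
      atTop (nhds 0)) :
    ∀ p : ℝ, 2 < p →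
      Tendsto (fun n => ∫⁻ x : ℝ, ENNReal.ofReal (|u n x| ^ p)) atTop (nhds 0) := by
  intro p hp
  have hL : 0 < 2*R := by linarith
  have hWM : ∀ n, (∫⁻ x, W (u n) x) ≤ M := fun n => le_self_add.trans (hbound n)
  -- choose the interpolation exponent
  set m : ℕ := ⌈p⌉₊ + 1 with hm'
  have hm2 : 2 ≤ m := by
    have : 2 < ⌈p⌉₊ + 1 := by
      have := Nat.le_ceil p
      have h3 : (2:ℝ) < ⌈p⌉₊ + 1 := by linarith
      exact_mod_cast h3
    omega
  have hpm : p < 2*(m:ℝ) := by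
    have h1 := Nat.le_ceil p
    have : ((⌈p⌉₊:ℝ)) ≤ (m:ℝ) := by
      rw [hm']
      push_cast
      linarith
    nlinarith
  have hmR : (1:ℝ) < (m:ℝ) := by
    have : (2:ℝ) ≤ (m:ℝ) := by exact_mod_cast hm2
    linarith
  clear_value m
  set lam : ℝ := ((m:ℝ) - p/2)/((m:ℝ) - 1) with hlam'
  have hden : (0:ℝ) < (m:ℝ) - 1 := by linarith
  have hlam0 : 0 < lam := by
    apply div_pos ?_ hden
    linarith
  have hlam1 : lam < 1 := by
    rw [hlam', div_lt_one hden]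
    linarith
  have hkey : lam * ((m:ℝ) - 1) = (m:ℝ) - p/2 := by
    rw [hlam']
    field_simp
  clear_value lam
  have hMT := main_tendsto u hmeas M hM (fun n => hbound n) R hR hvanish m hm2
  obtain ⟨hT, hF⟩ := hMT
  -- rewrite the tsum as a global integral
  have hTi : Tendsto (fun n => ∫⁻ x, W (u n) x ^ m) atTop (nhds 0) := by
    have : (fun n => ∑' k : ℤ, ∫⁻ x in Ik (2*R) k, W (u n) x ^ m)
        = fun n => ∫⁻ x, W (u n) x ^ m := by
      funext n
      exact sum_eq hL _
    rwa [this] at hT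
  -- pointwise identification of the integrand
  have hpt : ∀ n x, ENNReal.ofReal (|u n x| ^ p) = W (u n) x ^ (p/2) := by
    intro n x
    have h1 : |u n x| ^ p = ((u n x)^2) ^ (p/2) := by
      rw [show (u n x)^2 = |u n x| ^ (2:ℝ) from by
          rw [← sq_abs]
          norm_num [Real.rpow_natCast],
        ← Real.rpow_mul (abs_nonneg _), show (2:ℝ)*(p/2) = p from by ring]
    rw [h1]
    exact (ENNReal.ofReal_rpow_of_nonneg (sq_nonneg _) (by positivity)).symm
  -- Hölder interpolation
  have hhold : ∀ n, (∫⁻ x, W (u n) x ^ (p/2))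
      ≤ M ^ lam * (∫⁻ x, W (u n) x ^ m) ^ (1-lam) := by
    intro n
    have hconj : (1/lam).HolderConjugate (1/(1-lam)) := by
      simpa only [one_div] using
        Real.HolderConjugate.inv_inv hlam0 (by linarith : (0:ℝ) < 1-lam) (by ring)
    have hW := meas_W (hmeas n)
    have hH := ENNReal.lintegral_mul_le_Lp_mul_Lq (volume)
      hconj
      (f := fun x => W (u n) x ^ lam) (g := fun x => W (u n) x ^ (p/2 - lam))
      ((hW.pow measurable_const).aemeasurable) ((hW.pow measurable_const).aemeasurable)
    have e1 : ∀ x, (fun x => W (u n) x ^ lam) x * (fun x => W (u n) x ^ (p/2 - lam)) x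
        = W (u n) x ^ (p/2) := by
      intro x
      rw [← ENNReal.rpow_add_of_nonneg _ _ hlam0.le (by linarith [hlam1, hp] : (0:ℝ) ≤ p/2 - lam)]
      congr 1
      ring
    have e2 : ∀ x, ((fun x => W (u n) x ^ lam) x) ^ (1/lam) = W (u n) x := by
      intro x
      rw [← ENNReal.rpow_mul, mul_one_div_cancel hlam0.ne', ENNReal.rpow_one]
    have e3 : ∀ x, ((fun x => W (u n) x ^ (p/2 - lam)) x) ^ (1/(1-lam)) = W (u n) x ^ m := by
      intro x
      rw [← ENNReal.rpow_mul]
      rw [show (p/2 - lam) * (1/(1-lam)) = (m:ℝ) from by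
        rw [mul_one_div, div_eq_iff (by linarith : (1:ℝ)-lam ≠ 0)]
        linear_combination hkey]
      exact ENNReal.rpow_natCast _ m
    calc (∫⁻ x, W (u n) x ^ (p/2))
        = ∫⁻ x, ((fun x => W (u n) x ^ lam) * (fun x => W (u n) x ^ (p/2 - lam))) x := by
          apply lintegral_congr
          intro x
          exact (e1 x).symm
      _ ≤ (∫⁻ x, ((fun x => W (u n) x ^ lam) x) ^ (1/lam)) ^ (1/(1/lam))
          * (∫⁻ x, ((fun x => W (u n) x ^ (p/2 - lam)) x) ^ (1/(1-lam))) ^ (1/(1/(1-lam))) := hH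
      _ = (∫⁻ x, W (u n) x) ^ lam * (∫⁻ x, W (u n) x ^ m) ^ (1-lam) := by
          rw [one_div_one_div, one_div_one_div]
          congr 2
          · exact lintegral_congr e2
          · exact lintegral_congr e3
      _ ≤ M ^ lam * (∫⁻ x, W (u n) x ^ m) ^ (1-lam) := by
          gcongr
          exact hWM n
  -- squeeze
  simp only [hpt]
  rw [ENNReal.tendsto_nhds_zero]
  intro δ hδ
  have hMl : M ^ lam ≠ ⊤ := ENNReal.rpow_ne_top_of_nonneg hlam0.le hM
  have hq0 : δ / (M ^ lam + 1) ≠ 0 := by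
    simp only [ne_eq, ENNReal.div_eq_zero_iff, not_or]
    exact ⟨hδ.ne', ENNReal.add_ne_top.2 ⟨hMl, ENNReal.one_ne_top⟩⟩
  have hδ'0 : (0:ENNReal) < (δ / (M ^ lam + 1)) ^ (1/(1-lam)) := by
    rw [pos_iff_ne_zero]
    intro h
    rw [ENNReal.rpow_eq_zero_iff] at h
    rcases h with ⟨h1, _⟩ | ⟨_, h2⟩
    · exact hq0 h1
    · have : (0:ℝ) < 1/(1-lam) := by
        apply div_pos one_pos
        linarith
      linarith
  filter_upwards [ENNReal.tendsto_nhds_zero.1 hTi _ hδ'0] with n hn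
  calc ∫⁻ x, W (u n) x ^ (p/2)
      ≤ M ^ lam * (∫⁻ x, W (u n) x ^ m) ^ (1-lam) := hhold n
    _ ≤ M ^ lam * ((δ / (M ^ lam + 1)) ^ (1/(1-lam))) ^ (1-lam) :=
        mul_le_mul' le_rfl (ENNReal.rpow_le_rpow hn (by linarith))
    _ = M ^ lam * (δ / (M ^ lam + 1)) := by
        rw [← ENNReal.rpow_mul, one_div_mul_cancel (by linarith : (1:ℝ)-lam ≠ 0),
          ENNReal.rpow_one]
    _ ≤ (M ^ lam + 1) * (δ / (M ^ lam + 1)) := by gcongr; exact le_self_add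
    _ ≤ δ := ENNReal.mul_div_le
end

section
/- Let f : ℝ → ℝ be continuous with f(s)/s strictly increasing on (0,∞) and f odd. Let u, v : ℝ → ℝ be measurable with ∫_ℝ f(u)u dx and ∫_ℝ f(v)v dx finite, and suppose (tₙ) ⊂ (0,∞) with tₙ ≥ 1 + ε₀ for all n and some ε₀ > 0. If ∫_ℝ (f(tₙu)u/tₙ − f(u)u) dx → 0 as n → ∞ and u ≢ 0, then ∫_ℝ (f((1+ε₀)u)u/(1+ε₀) − f(u)u) dx ≤ 0, contradicting strict positivity of the integrand on {u ≠ 0}; hence no such sequence (tₙ) exists, i.e., limsupₙ tₙ ≤ 1 whenever the above difference tends to 0 with u ≢ 0. -/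
open MeasureTheory Filter

theorem stmt_19 (f : ℝ → ℝ) (hf : Continuous f)
    (hmono : StrictMonoOn (fun s => f s / s) (Set.Ioi (0 : ℝ)))
    (hodd : ∀ s, f (-s) = -f s)
    (u : ℝ → ℝ) (hu : Measurable u)
    (hint : Integrable (fun x => f (u x) * u x))
    (t : ℕ → ℝ) (ht : ∀ n, 0 < t n)
    (hintn : ∀ n, Integrable (fun x => f (t n * u x) * u x))
    (hconv : Tendsto
      (fun n => ∫ x : ℝ, (f (t n * u x) * u x / t n - f (u x) * u x))
      atTop (nhds 0))
    (hu0 : ¬ (∀ᵐ x : ℝ, u x = 0)) :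
    limsup t atTop ≤ 1 := by
  have hf0 : f 0 = 0 := by have := hodd 0; simp at this; linarith
  -- key strict monotonicity of a ↦ f(a s) s / a for s ≠ 0
  have key : ∀ s : ℝ, s ≠ 0 → ∀ a c : ℝ, 0 < a → a < c →
      f (a * s) * s / a < f (c * s) * s / c := by
    have pos : ∀ s : ℝ, 0 < s → ∀ a c : ℝ, 0 < a → a < c →
        f (a * s) * s / a < f (c * s) * s / c := by
      intro s hs a c ha hac
      have hc : 0 < c := ha.trans hac
      have h1 : f (a * s) / (a * s) < f (c * s) / (c * s) :=
        hmono (Set.mem_Ioi.mpr (mul_pos ha hs)) (Set.mem_Ioi.mpr (mul_pos hc hs))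
          (by nlinarith)
      have h2 := mul_lt_mul_of_pos_right h1 (mul_pos hs hs)
      have e1 : f (a * s) / (a * s) * (s * s) = f (a * s) * s / a := by
        field_simp
      have e2 : f (c * s) / (c * s) * (s * s) = f (c * s) * s / c := by
        field_simp
      rw [e1, e2] at h2; exact h2
    intro s hs a c ha hac
    rcases hs.lt_or_gt with h | h
    · have hkey := pos (-s) (by linarith) a c ha hac
      have e1 : ∀ r : ℝ, f (r * -s) * -s = f (r * s) * s := by
        intro r
        rw [show r * -s = -(r * s) by ring, hodd]; ring
      rw [e1 a, e1 c] at hkey; exact hkey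
    · exact pos s h a c ha hac
  by_contra hcon
  push_neg at hcon
  set b : ℝ := (1 + limsup t atTop) / 2 with hb
  have hb1 : 1 < b := by simp only [hb]; linarith
  have hbl : b < limsup t atTop := by simp only [hb]; linarith
  have hcob : IsCoboundedUnder (· ≤ ·) atTop t :=
    (isBoundedUnder_of ⟨0, fun n => (ht n).le⟩ :
      IsBoundedUnder (· ≥ ·) atTop t).isCoboundedUnder_le
  have hfreq : ∃ᶠ n in atTop, b < t n := frequently_lt_of_lt_limsup hcob hbl
  set D : ℝ → ℝ := fun s => f (b * s) * s / b - f s * s with hD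
  have hDeven : ∀ s, D (-s) = D s := by
    intro s
    simp only [hD]
    rw [show b * -s = -(b * s) by ring, hodd, hodd]; ring
  have hDpos : ∀ s : ℝ, s ≠ 0 → 0 < D s := by
    intro s hs
    have := key s hs 1 b one_pos hb1
    simp only [one_mul, div_one] at this
    simp only [hD]; linarith
  have hDnonneg : ∀ s : ℝ, 0 ≤ D s := by
    intro s
    rcases eq_or_ne s 0 with rfl | hs
    · simp [hD, hf0]
    · exact (hDpos s hs).le
  have hDcont : Continuous D := by
    apply Continuous.sub
    · exact ((hf.comp (continuous_const.mul continuous_id)).mul continuous_id).div_const b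
    · exact hf.mul continuous_id
  -- find a set of positive finite measure where |u| is bounded away from 0 and ∞
  set A : ℕ → Set ℝ := fun k =>
    Set.Icc (-((k : ℝ) + 1)) ((k : ℝ) + 1) ∩
      u ⁻¹' {s | ((k : ℝ) + 1)⁻¹ ≤ |s| ∧ |s| ≤ (k : ℝ) + 1} with hA
  have hAmeas : ∀ k, MeasurableSet (A k) := by
    intro k
    apply measurableSet_Icc.inter
    apply hu
    exact (measurableSet_le measurable_const measurable_abs).inter
      (measurableSet_le measurable_abs measurable_const)
  have hAsub : {x : ℝ | u x ≠ 0} ⊆ ⋃ k, A k := by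
    intro x hx
    have hxne : u x ≠ 0 := hx
    have habs : 0 < |u x| := abs_pos.mpr hxne
    obtain ⟨k, hk⟩ := exists_nat_ge (max (max |x| |u x|) |u x|⁻¹)
    have hk1 : |x| ≤ (k : ℝ) := le_trans (le_max_of_le_left (le_max_left _ _)) hk
    have hk2 : |u x| ≤ (k : ℝ) := le_trans (le_max_of_le_left (le_max_right _ _)) hk
    have hk3 : |u x|⁻¹ ≤ (k : ℝ) := le_trans (le_max_right _ _) hk
    have hk1' := abs_le.mp hk1
    refine Set.mem_iUnion.mpr ⟨k, ⟨by linarith [hk1'.1], by linarith [hk1'.2]⟩, ?_, by linarith⟩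
    have h4 : |u x|⁻¹ ≤ (k : ℝ) + 1 := by linarith
    have := inv_anti₀ (inv_pos.mpr habs) h4
    rwa [inv_inv] at this
  have hAex : ∃ k, 0 < volume (A k) := by
    by_contra hall
    push_neg at hall
    have hz : ∀ k, volume (A k) = 0 := fun k => le_antisymm (hall k) zero_le
    have : volume {x : ℝ | u x ≠ 0} = 0 := by
      refine measure_mono_null hAsub ?_
      exact (measure_iUnion_null hz)
    exact hu0 (by rw [ae_iff]; simpa using this)
  obtain ⟨k, hk⟩ := hAex
  have hAfin : volume (A k) < ⊤ := by
    calc volume (A k) ≤ volume (Set.Icc (-((k : ℝ) + 1)) ((k : ℝ) + 1)) :=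
          measure_mono (Set.inter_subset_left)
      _ < ⊤ := by rw [Real.volume_Icc]; exact ENNReal.ofReal_lt_top
  -- minimum of D on the compact set
  have hknn : ((k : ℝ) + 1)⁻¹ ≤ (k : ℝ) + 1 := by
    have h1 : (1 : ℝ) ≤ (k : ℝ) + 1 := by linarith [Nat.cast_nonneg (α := ℝ) k]
    calc ((k : ℝ) + 1)⁻¹ ≤ 1 := by
          rw [inv_le_one_iff₀]; right; exact h1
      _ ≤ (k : ℝ) + 1 := h1
  obtain ⟨s₀, hs₀mem, hs₀min⟩ :=
    isCompact_Icc.exists_isMinOn (Set.nonempty_Icc.mpr hknn) hDcont.continuousOn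
  have hs₀pos : (0 : ℝ) < s₀ := lt_of_lt_of_le (inv_pos.mpr (by positivity : (0:ℝ) < (k:ℝ)+1)) hs₀mem.1
  set c₀ : ℝ := D s₀ with hc₀
  have hc₀pos : 0 < c₀ := hDpos s₀ hs₀pos.ne'
  have hDA : ∀ x ∈ A k, c₀ ≤ D (u x) := by
    intro x hx
    have h1 : ((k : ℝ) + 1)⁻¹ ≤ |u x| := hx.2.1
    have h2 : |u x| ≤ (k : ℝ) + 1 := hx.2.2
    have : D (u x) = D |u x| := by
      rcases abs_choice (u x) with h | h
      · rw [h]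
      · rw [h, hDeven]
    rw [this]
    exact hs₀min ⟨h1, h2⟩
  set c : ℝ := c₀ * (volume (A k)).toReal with hc
  have hcpos : 0 < c :=
    mul_pos hc₀pos (ENNReal.toReal_pos hk.ne' hAfin.ne)
  have hev : ∀ᶠ n in atTop,
      (∫ x : ℝ, (f (t n * u x) * u x / t n - f (u x) * u x)) < c :=
    hconv.eventually_lt_const hcpos
  obtain ⟨n, hbn, hlt⟩ := (hfreq.and_eventually hev).exists
  -- the integrand dominates D ∘ u pointwise
  set g : ℝ → ℝ := fun x => f (t n * u x) * u x / t n - f (u x) * u x with hg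
  have hgD : ∀ x, D (u x) ≤ g x := by
    intro x
    rcases eq_or_ne (u x) 0 with h0 | h0
    · simp [hg, hD, h0, hf0]
    · have h1 := key (u x) h0 b (t n) (by linarith) hbn
      have h2 := key (u x) h0 1 (t n) one_pos (by linarith)
      simp only [one_mul, div_one] at h2
      simp only [hg, hD]
      linarith
  have hgnn : ∀ x, 0 ≤ g x := fun x => (hDnonneg (u x)).trans (hgD x)
  have hgint : Integrable g := ((hintn n).div_const (t n)).sub hint
  have hset : c ≤ ∫ x in A k, g x := by
    have := setIntegral_ge_of_const_le_real (hAmeas k) hAfin.ne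
      (fun x hx => (hDA x hx).trans (hgD x)) hgint.integrableOn
    rw [measureReal_def] at this
    linarith [this, hc]
  have hfull : (∫ x in A k, g x) ≤ ∫ x, g x :=
    setIntegral_le_integral hgint (Filter.Eventually.of_forall hgnn)
  have : c ≤ ∫ x : ℝ, (f (t n * u x) * u x / t n - f (u x) * u x) :=
    hset.trans hfull
  linarith
end
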